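/- Let 0 → F_n → ⋯ → F_1 → F_0 → G → 0 be an exact sequence of functors Mod(R) → Mod(R) such that each F_i is (n−i)-connected. Then G is n-connected. -/

import Mathlib

open CategoryTheory Limits AlgebraicTopology

variable {R : Type} [CommRing R]

/-- `π_j` of a simplicial `R`-module: the `j`-th homology of its normalized Moore complex. -/
noncomputable def simplicialPi (A : SimplicialObject (ModuleCat R)) (j : ℕ) : ModuleCat R :=
  ((normalizedMooreComplex (ModuleCat R)).obj A).homology j

/-- A functor `F : Mod(R) → Mod(R)` is `n`-connected if for every `k ≥ 0` and every
`k`-connected simplicial `R`-module `A•` with free components, the simplicial module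
`F(A•)` (applying `F` degreewise) is `(k+n)`-connected. -/
def IsConnectedFunctor {R : Type} [CommRing R] (F : ModuleCat R ⥤ ModuleCat R) (n : ℕ) :
    Prop :=
  ∀ (k : ℕ) (A : SimplicialObject (ModuleCat R)),
    (∀ m : SimplexCategoryᵒᵖ, Module.Free R (A.obj m)) →
    (∀ i ≤ k, IsZero (simplicialPi A i)) →
    ∀ i ≤ k + n, IsZero (simplicialPi (A ⋙ F) i)

namespace ResolutionAux

/-- Transfer `π_j = 0` to vanishing of the homology of the alternating face map complex. -/
lemma pi_isZero_iff (X : SimplicialObject (ModuleCat R)) (j : ℕ) :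
    IsZero (simplicialPi X j) ↔
      IsZero (((alternatingFaceMapComplex (ModuleCat R)).obj X).homology j) := by
  let e := DoldKan.homotopyEquivNormalizedMooreComplexAlternatingFaceMapComplex (Y := X)
  have : QuasiIsoAt e.hom j := inferInstance
  have : IsIso (HomologicalComplex.homologyMap e.hom j) := (quasiIsoAt_iff_isIso_homologyMap e.hom j).1 this
  exact Iso.isZero_iff (@asIso _ _ _ _ _ this)

lemma isZero_all {M : ModuleCat R} (h : IsZero M) : ∀ a : M, a = 0 := by
  intro a
  have h1 : 𝟙 M = 0 := h.eq_of_tgt _ _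
  calc a = (𝟙 M) a := rfl
    _ = (0 : M ⟶ M) a := by rw [h1]
    _ = 0 := rfl

/-- If a short complex of modules is exact and its outer terms vanish, so does the middle. -/
lemma isZero_X₂ {S : ShortComplex (ModuleCat R)} (hS : S.Exact)
    (h1 : IsZero S.X₁) (h3 : IsZero S.X₃) : IsZero S.X₂ := by
  rw [ShortComplex.moduleCat_exact_iff] at hS
  have : Subsingleton S.X₂ := by
    constructor
    intro a b
    suffices hz : ∀ c : S.X₂, c = 0 by rw [hz a, hz b]
    intro c
    obtain ⟨x, hx⟩ := hS c (isZero_all h3 _)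
    rw [← hx, isZero_all h1 x, map_zero]
  exact ModuleCat.isZero_of_subsingleton _

lemma hom_comm_apply {K L : ChainComplex (ModuleCat R) ℕ} (f : K ⟶ L) (i j : ℕ)
    (x : K.X i) : f.f j (K.d i j x) = L.d i j (f.f i x) :=
  (congr_arg (fun φ : K.X i ⟶ L.X j => φ x) (f.comm i j)).symm

/-- Kernel subcomplex of a chain map, defined concretely. -/
noncomputable def kerComplex {K L : ChainComplex (ModuleCat R) ℕ} (f : K ⟶ L) :
    ChainComplex (ModuleCat R) ℕ where
  X m := ModuleCat.of R (LinearMap.ker (f.f m).hom)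
  d i j := ModuleCat.ofHom (LinearMap.restrict (K.d i j).hom (fun x hx => by
    have hx' : f.f i x = 0 := hx
    show f.f j (K.d i j x) = 0
    rw [hom_comm_apply f i j x, hx', map_zero]))
  shape i j hij := by
    apply ModuleCat.hom_ext; apply LinearMap.ext; intro x
    apply Subtype.ext
    show K.d i j x.1 = 0
    rw [K.shape i j hij]; rfl
  d_comp_d' i j l _ _ := by
    apply ModuleCat.hom_ext; apply LinearMap.ext; intro x
    apply Subtype.ext
    show K.d j l (K.d i j x.1) = 0
    exact congr_arg (fun φ : K.X i ⟶ K.X l => φ x.1) (K.d_comp_d i j l)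

/-- The inclusion of the kernel subcomplex. -/
noncomputable def kerComplexι {K L : ChainComplex (ModuleCat R) ℕ} (f : K ⟶ L) :
    kerComplex f ⟶ K where
  f m := ModuleCat.ofHom (LinearMap.ker (f.f m).hom).subtype
  comm' i j _ := by apply ModuleCat.hom_ext; apply LinearMap.ext; intro x; rfl

/-- Corestriction of `u : X ⟶ Y` to the kernel subcomplex of `v : Y ⟶ Z`. -/
noncomputable def kerComplexLift {X Y Z : ChainComplex (ModuleCat R) ℕ}
    (u : X ⟶ Y) (v : Y ⟶ Z) (hw : ∀ m x, v.f m (u.f m x) = 0) :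
    X ⟶ kerComplex v where
  f m := ModuleCat.ofHom (LinearMap.codRestrict (LinearMap.ker (v.f m).hom) (u.f m).hom (fun x =>
    hw m x))
  comm' i j _ := by
    apply ModuleCat.hom_ext; apply LinearMap.ext; intro x
    apply Subtype.ext
    show Y.d i j (u.f i x) = u.f j (X.d i j x)
    exact (hom_comm_apply u i j x).symm

/-- The short complex `ker u → X → ker v` associated to `X → Y → Z`. -/
noncomputable def sesOf {X Y Z : ChainComplex (ModuleCat R) ℕ}
    (u : X ⟶ Y) (v : Y ⟶ Z) (hw : ∀ m x, v.f m (u.f m x) = 0) :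
    ShortComplex (ChainComplex (ModuleCat R) ℕ) :=
  ShortComplex.mk (kerComplexι u) (kerComplexLift u v hw) (by
    ext m x
    apply Subtype.ext (p := fun y => y ∈ LinearMap.ker (v.f m).hom)
    show u.f m (x : LinearMap.ker (u.f m).hom).1 = 0
    exact (x : LinearMap.ker (u.f m).hom).2)

lemma sesOf_shortExact {X Y Z : ChainComplex (ModuleCat R) ℕ}
    (u : X ⟶ Y) (v : Y ⟶ Z) (hw : ∀ m x, v.f m (u.f m x) = 0)
    (hexact : ∀ m, Function.Exact (u.f m) (v.f m)) :
    (sesOf u v hw).ShortExact := by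
  rw [HomologicalComplex.shortExact_iff_degreewise_shortExact]
  intro m
  apply ShortComplex.ShortExact.mk'
  · rw [ShortComplex.moduleCat_exact_iff]
    intro y hy
    have hy' : u.f m y = 0 := congr_arg (Subtype.val (p := fun z => z ∈ LinearMap.ker (v.f m).hom)) hy
    exact ⟨(⟨y, hy'⟩ : LinearMap.ker (u.f m).hom), rfl⟩
  · refine (ModuleCat.mono_iff_injective _).2 ?_
    intro a b hab
    exact Subtype.ext (p := fun z => z ∈ LinearMap.ker (u.f m).hom) hab
  · refine (ModuleCat.epi_iff_surjective _).2 ?_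
    rintro (⟨y, hy⟩ : LinearMap.ker (v.f m).hom)
    obtain ⟨x, hx⟩ := (hexact m y).1 hy
    exact ⟨x, Subtype.ext (p := fun z => z ∈ LinearMap.ker (v.f m).hom) hx⟩

/-- The short complex `ker u → X → Y` for a degreewise surjective `u : X ⟶ Y`. -/
noncomputable def sesOfSurj {X Y : ChainComplex (ModuleCat R) ℕ} (u : X ⟶ Y) :
    ShortComplex (ChainComplex (ModuleCat R) ℕ) :=
  ShortComplex.mk (kerComplexι u) u (by
    ext m x
    exact (x : LinearMap.ker (u.f m).hom).2)

lemma sesOfSurj_shortExact {X Y : ChainComplex (ModuleCat R) ℕ} (u : X ⟶ Y)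
    (hu : ∀ m, Function.Surjective (u.f m)) : (sesOfSurj u).ShortExact := by
  rw [HomologicalComplex.shortExact_iff_degreewise_shortExact]
  intro m
  apply ShortComplex.ShortExact.mk'
  · rw [ShortComplex.moduleCat_exact_iff]
    intro y hy
    exact ⟨(⟨y, hy⟩ : LinearMap.ker (u.f m).hom), rfl⟩
  · refine (ModuleCat.mono_iff_injective _).2 ?_
    intro a b hab
    exact Subtype.ext (p := fun z => z ∈ LinearMap.ker (u.f m).hom) hab
  · exact (ModuleCat.epi_iff_surjective _).2 (hu m)

/-- Long exact sequence argument: vanishing of `H_j X₃` from vanishing of `H_j X₂`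
and `H_{j-1} X₁`. -/
lemma isZero_homology_X₃ {S : ShortComplex (ChainComplex (ModuleCat R) ℕ)}
    (hS : S.ShortExact) (j : ℕ) (h2 : IsZero (S.X₂.homology j))
    (h1 : ∀ jj, j = jj + 1 → IsZero (S.X₁.homology jj)) :
    IsZero (S.X₃.homology j) := by
  match j with
  | 0 =>
    have hepi : Epi (S.g.f 0) :=
      ((HomologicalComplex.shortExact_iff_degreewise_shortExact S).1 hS 0).epi_g
    have : Epi (HomologicalComplex.homologyMap S.g 0) :=
      HomologicalComplex.epi_homologyMap_of_epi_of_not_rel S.g 0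
        (fun j hj => by simp [ComplexShape.down_Rel] at hj)
    exact IsZero.of_epi (HomologicalComplex.homologyMap S.g 0) h2
  | (jj + 1) =>
    exact isZero_X₂ (hS.homology_exact₃ (jj + 1) jj (by simp)) h2 (h1 jj rfl)

end ResolutionAux

open ResolutionAux in
/-- Let `0 → F_n → ⋯ → F_1 → F_0 → G → 0` be an exact sequence of functors
`Mod(R) → Mod(R)` (exact after evaluation at every module) such that `F_i` is
`(n−i)`-connected.  Then `G` is `n`-connected.  The sequence is encoded as a chain
complex `D` of functors with `D.X 0 = G` and `D.X (i+1) = F_i`, vanishing above degree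
`n+1`, exact at every evaluation. -/
theorem isConnectedFunctor_of_exact_resolution (R : Type) [CommRing R] (n : ℕ)
    (D : ChainComplex (ModuleCat R ⥤ ModuleCat R) ℕ)
    (htop : ∀ i, n + 1 < i → IsZero (D.X i))
    (hinj : ∀ M : ModuleCat R, Function.Injective ((D.d (n + 1) n).app M))
    (hexact : ∀ (i : ℕ) (M : ModuleCat R),
      Function.Exact ((D.d (i + 2) (i + 1)).app M) ((D.d (i + 1) i).app M))
    (hsurj : ∀ M : ModuleCat R, Function.Surjective ((D.d 1 0).app M))
    (hconn : ∀ i ≤ n, IsConnectedFunctor (D.X (i + 1)) (n - i)) :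
    IsConnectedFunctor (D.X 0) n := by
  intro k A hfree hA i hi
  -- the chain complexes obtained by applying the resolution degreewise to `A`
  let C : ℕ → ChainComplex (ModuleCat R) ℕ := fun i =>
    (alternatingFaceMapComplex (ModuleCat R)).obj (A ⋙ D.X i)
  let f : ∀ i, C (i + 1) ⟶ C i := fun i =>
    (alternatingFaceMapComplex (ModuleCat R)).map (Functor.whiskerLeft A (D.d (i + 1) i))
  have hfm : ∀ i m, (f i).f m = (D.d (i + 1) i).app (A.obj (Opposite.op (SimplexCategory.mk m))) :=
    fun i m => rfl
  -- vanishing of the homology of `C (i+1)` from connectivity of the functors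
  have hC : ∀ i ≤ n, ∀ j, j + i ≤ k + n → IsZero ((C (i + 1)).homology j) := by
    intro i hi' j hj
    have := hconn i hi' k A hfree hA j (by omega)
    exact (pi_isZero_iff _ j).1 this
  -- degreewise exactness
  have hw : ∀ i, ∀ m x, (f i).f m ((f (i + 1)).f m x) = 0 := by
    intro i m x
    exact (hexact i (A.obj (Opposite.op (SimplexCategory.mk m)))).apply_apply_eq_zero x
  have hex : ∀ i m, Function.Exact ((f (i + 1)).f m) ((f i).f m) := by
    intro i m
    exact hexact i (A.obj (Opposite.op (SimplexCategory.mk m)))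
  -- the top kernel vanishes
  have hKn : ∀ j, IsZero ((kerComplex (f n)).homology j) := by
    intro j
    have hz : IsZero (ModuleCat.of R (LinearMap.ker ((f n).f j).hom)) := by
      have hinj' : Function.Injective ((f n).f j) :=
        hinj (A.obj (Opposite.op (SimplexCategory.mk j)))
      have : Subsingleton ↥(LinearMap.ker ((f n).f j).hom) :=
        ⟨fun a b => Subtype.ext
          (hinj' ((LinearMap.mem_ker.mp a.2).trans (LinearMap.mem_ker.mp b.2).symm))⟩
      exact @ModuleCat.isZero_of_subsingleton _ _ (ModuleCat.of R _) this
    rw [← HomologicalComplex.exactAt_iff_isZero_homology, HomologicalComplex.exactAt_iff]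
    exact ShortComplex.exact_of_isZero_X₂ _ hz
  -- main downward induction
  have key : ∀ d i, i + d = n → ∀ j, j + i + 1 ≤ k + n →
      IsZero ((kerComplex (f i)).homology j) := by
    intro d
    induction d with
    | zero =>
      intro i hi' j _
      obtain rfl : i = n := by omega
      exact hKn j
    | succ d IH =>
      intro i hi' j hj
      refine isZero_homology_X₃ (sesOf_shortExact (f (i + 1)) (f i) (hw i) (hex i)) j ?_ ?_
      · exact hC (i + 1) (by omega) j (by omega)
      · intro jj hjj
        exact IH (i + 1) (by omega) jj (by omega)
  -- conclude using the bottom short exact sequence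
  rw [pi_isZero_iff]
  refine isZero_homology_X₃
    (sesOfSurj_shortExact (f 0)
      (fun m => hsurj (A.obj (Opposite.op (SimplexCategory.mk m))))) i ?_ ?_
  · exact hC 0 (Nat.zero_le n) i (by omega)
  · intro jj hjj
    exact key n 0 (by omega) jj (by omega)
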